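/- arXiv:2502.16132 — 2 statements merged into one kernel-verified Lean document; each statement's English description precedes it below -/
import Mathlib

section
/- Define the sequence of positive integers n_0 = 45 and n_{m+1} = 2·(2^{m+5} − 1)·n_m for m ≥ 0, and let d_m = 3^{m+1}. Then there exist constants 0 < c_1 ≤ c_2 such that for every m ≥ 1, 2^{c_1·√(log₂ n_m)} ≤ d_m ≤ 2^{c_2·√(log₂ n_m)}. -/
/-- Block length of the level-`m` code `C_m`: `n_0 = 45`, `n_{m+1} = 2·(2^{m+5} − 1)·n_m`. -/
def towerBlockLength : ℕ → ℕ
  | 0 => 45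
  | m + 1 => 2 * (2 ^ (m + 5) - 1) * towerBlockLength m

/-- Code distance of the level-`m` code `C_m`: `d_m = 3^{m+1}`. -/
def towerDistance (m : ℕ) : ℕ := 3 ^ (m + 1)

private def towerE : ℕ → ℕ
  | 0 => 0
  | m + 1 => towerE m + (m + 5)

private lemma towerE_sq (m : ℕ) : m ^ 2 ≤ 2 * towerE m := by
  induction m with
  | zero => simp [towerE]
  | succ k ih => simp only [towerE]; nlinarith

private lemma towerBlockLength_lower (m : ℕ) :
    2 ^ (towerE m) ≤ towerBlockLength m := by
  induction m with
  | zero => simp [towerE, towerBlockLength]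
  | succ k ih =>
    have h2 : (2:ℕ) ≤ 2 ^ (k + 5) := by
      calc (2:ℕ) = 2 ^ 1 := rfl
      _ ≤ 2 ^ (k + 5) := Nat.pow_le_pow_right (by norm_num) (by omega)
    calc 2 ^ (towerE (k+1)) = 2 ^ (k + 5) * 2 ^ (towerE k) := by
          rw [towerE, ← pow_add]; ring_nf
      _ ≤ (2 * (2 ^ (k + 5) - 1)) * towerBlockLength k := by
          apply Nat.mul_le_mul _ ih
          omega
      _ = towerBlockLength (k+1) := rfl

private lemma towerBlockLength_upper (m : ℕ) :
    towerBlockLength m ≤ 2 ^ (16 * m ^ 2 + 6) := by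
  induction m with
  | zero => norm_num [towerBlockLength]
  | succ k ih =>
    calc towerBlockLength (k+1) = 2 * (2 ^ (k + 5) - 1) * towerBlockLength k := rfl
      _ ≤ 2 ^ (k + 6) * 2 ^ (16 * k ^ 2 + 6) := by
          apply Nat.mul_le_mul _ ih
          have : (1:ℕ) ≤ 2 ^ (k+5) := Nat.one_le_two_pow
          calc 2 * (2 ^ (k + 5) - 1) ≤ 2 * 2 ^ (k+5) := by omega
            _ = 2 ^ (k+6) := by rw [pow_succ]; ring
      _ = 2 ^ (k + 6 + (16 * k ^ 2 + 6)) := by rw [← pow_add]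
      _ ≤ 2 ^ (16 * (k+1) ^ 2 + 6) := Nat.pow_le_pow_right (by norm_num) (by nlinarith)

private lemma towerBlockLength_pos (m : ℕ) : 0 < towerBlockLength m :=
  lt_of_lt_of_le (Nat.pow_pos (by norm_num)) (towerBlockLength_lower m)

/-- The distance of `C_m` is `2^{Θ(√(log₂ n))}` in terms of the block length `n = n_m`:
there exist constants `0 < c₁ ≤ c₂` such that for every `m ≥ 1`,
`2^{c₁·√(log₂ n_m)} ≤ d_m ≤ 2^{c₂·√(log₂ n_m)}`. -/
theorem towerDistance_bounds :
    ∃ c₁ c₂ : ℝ, 0 < c₁ ∧ c₁ ≤ c₂ ∧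
      ∀ m : ℕ, 1 ≤ m →
        (2 : ℝ) ^ (c₁ * Real.sqrt (Real.logb 2 (towerBlockLength m))) ≤
            (towerDistance m : ℝ) ∧
        (towerDistance m : ℝ) ≤
            (2 : ℝ) ^ (c₂ * Real.sqrt (Real.logb 2 (towerBlockLength m))) := by
  refine ⟨1/5, 6, by norm_num, by norm_num, fun m hm => ?_⟩
  set L := Real.logb 2 (towerBlockLength m) with hL
  have hnpos : (0:ℝ) < towerBlockLength m := by
    exact_mod_cast towerBlockLength_pos m
  -- lower bound on L
  have hLlow : ((towerE m : ℝ)) ≤ L := by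
    rw [hL]
    have h1 : ((2:ℝ) ^ (towerE m)) ≤ (towerBlockLength m : ℝ) := by
      exact_mod_cast towerBlockLength_lower m
    calc ((towerE m : ℝ)) = Real.logb 2 ((2:ℝ) ^ (towerE m)) := by
          rw [Real.logb_pow]; simp [Real.logb_self_eq_one]
      _ ≤ Real.logb 2 (towerBlockLength m) :=
          Real.logb_le_logb_of_le (by norm_num) (by positivity) h1
  have hLhigh : L ≤ (16 * (m:ℝ) ^ 2 + 6) := by
    rw [hL]
    have h1 : (towerBlockLength m : ℝ) ≤ (2:ℝ) ^ (16 * m ^ 2 + 6) := by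
      exact_mod_cast towerBlockLength_upper m
    calc Real.logb 2 (towerBlockLength m) ≤ Real.logb 2 ((2:ℝ) ^ (16 * m ^ 2 + 6)) :=
          Real.logb_le_logb_of_le (by norm_num) hnpos h1
      _ = (16 * (m:ℝ) ^ 2 + 6) := by
          rw [Real.logb_pow]; simp [Real.logb_self_eq_one]
  have hm1 : (1:ℝ) ≤ (m:ℝ) := by exact_mod_cast hm
  have hLnonneg : 0 ≤ L := le_trans (by positivity) hLlow
  have hLsq_low : ((m:ℝ) ^ 2) / 2 ≤ L := by
    have h2 : ((m:ℝ)^2) ≤ 2 * (towerE m : ℝ) := by exact_mod_cast towerE_sq m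
    linarith
  have hsqrt_low : (2/3) * (m:ℝ) ≤ Real.sqrt L := by
    rw [show (2/3) * (m:ℝ) = Real.sqrt (((2/3) * (m:ℝ))^2) from
      (Real.sqrt_sq (by positivity)).symm]
    apply Real.sqrt_le_sqrt
    nlinarith
  have hsqrt_high : Real.sqrt L ≤ 5 * (m:ℝ) := by
    rw [show (5:ℝ) * (m:ℝ) = Real.sqrt ((5 * (m:ℝ))^2) from
      (Real.sqrt_sq (by positivity)).symm]
    apply Real.sqrt_le_sqrt
    nlinarith
  have h12 : (1:ℝ) < 2 := by norm_num
  constructor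
  · -- 2 ^ ((1/5)·√L) ≤ 3^(m+1)
    calc (2:ℝ) ^ ((1/5) * Real.sqrt L) ≤ (2:ℝ) ^ ((m:ℝ)) := by
          apply Real.rpow_le_rpow_of_exponent_le (by norm_num)
          linarith
      _ = ((2:ℝ) ^ m : ℝ) := by rw [Real.rpow_natCast]
      _ ≤ (3:ℝ) ^ (m+1) := by
          have : (2:ℝ)^m ≤ (3:ℝ)^m := pow_le_pow_left₀ (by norm_num) (by norm_num) m
          calc (2:ℝ)^m ≤ (3:ℝ)^m := this
            _ ≤ (3:ℝ)^(m+1) := pow_le_pow_right₀ (by norm_num) (by omega)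
      _ = (towerDistance m : ℝ) := by rw [towerDistance]; push_cast; ring
  · -- 3^(m+1) ≤ 2 ^ (6·√L)
    calc (towerDistance m : ℝ) = (3:ℝ) ^ (m+1) := by rw [towerDistance]; push_cast; ring
      _ ≤ (4:ℝ) ^ (m+1) := pow_le_pow_left₀ (by norm_num) (by norm_num) (m+1)
      _ = (2:ℝ) ^ (2*(m+1)) := by rw [pow_mul]; norm_num
      _ = (2:ℝ) ^ ((2*(m+1) : ℕ) : ℝ) := by rw [Real.rpow_natCast]
      _ ≤ (2:ℝ) ^ (6 * Real.sqrt L) := by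
          apply Real.rpow_le_rpow_of_exponent_le (by norm_num)
          push_cast
          nlinarith
end

section
/- Define sequences of positive integers by n_0 = 45, n_{m+1} = 2·(2^{m+5} − 1)·n_m, and k_0 = 7, k_{m+1} = 2·(2^{m+5} − 2(m+5) − 1)·(k_m − 1), for m ≥ 0. Then there exists a natural number N such that for every m ≥ 0 and every natural number n ≥ N·n_m, 20·⌊n/n_m⌋·k_m > n. -/
/-- Number of logical qubits of the level-`m` code `C_m`:
`k_0 = 7`, `k_{m+1} = 2·(2^{m+5} − 2(m+5) − 1)·(k_m − 1)`. -/
def towerLogicalQubits : ℕ → ℕ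
  | 0 => 7
  | m + 1 => 2 * (2 ^ (m + 5) - 2 * (m + 5) - 1) * (towerLogicalQubits m - 1)

lemma pow_lin1 : ∀ p : ℕ, 5 ≤ p → 4 * p + 2 ≤ 2 ^ p := by
  intro p hp
  induction p, hp using Nat.le_induction with
  | base => norm_num
  | succ p hp ih => rw [pow_succ]; omega

lemma pow_lin2 : ∀ p : ℕ, 8 ≤ p → 20 * p + 26 ≤ 2 ^ p := by
  intro p hp
  induction p, hp using Nat.le_induction with
  | base => norm_num
  | succ p hp ih => rw [pow_succ]; omega

lemma tower_pos : ∀ m, 0 < towerBlockLength m := by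
  intro m
  induction m with
  | zero => norm_num [towerBlockLength]
  | succ m ih =>
    have h := pow_lin1 (m + 5) (by omega)
    rw [towerBlockLength]
    have : 1 ≤ 2 ^ (m + 5) - 1 := by omega
    positivity

lemma tower_k7 : ∀ m, 7 ≤ towerLogicalQubits m := by
  intro m
  induction m with
  | zero => norm_num [towerLogicalQubits]
  | succ m ih =>
    have h := pow_lin1 (m + 5) (by omega)
    rw [towerLogicalQubits]
    have h1 : 1 ≤ 2 ^ (m + 5) - 2 * (m + 5) - 1 := by omega
    have h2 : 6 ≤ towerLogicalQubits m - 1 := by omega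
    calc (7:ℕ) ≤ 2 * 1 * 6 := by norm_num
    _ ≤ 2 * (2 ^ (m + 5) - 2 * (m + 5) - 1) * (towerLogicalQubits m - 1) :=
      Nat.mul_le_mul (Nat.mul_le_mul_left _ h1) h2

/-- For `m ≥ 3`, `k_m ≥ 4^(m+5)`. -/
lemma tower_k_sq : ∀ m, 3 ≤ m → 4 ^ (m + 5) ≤ towerLogicalQubits m := by
  intro m hm
  induction m, hm using Nat.le_induction with
  | base => norm_num [towerLogicalQubits]
  | succ m hm ih =>
    have h := pow_lin1 (m + 5) (by omega)
    rw [towerLogicalQubits]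
    set q := 2 ^ (m + 5) with hq
    have hqq : (4:ℕ) ^ (m + 5) = q * q := by
      rw [hq, ← pow_add, show (4:ℕ) = 2^2 from rfl, ← pow_mul]; ring_nf
    have h4 : (4:ℕ) ^ (m + 1 + 5) = 4 * (q * q) := by
      rw [show m + 1 + 5 = (m+5) + 1 from rfl, pow_succ, hqq]; ring
    rw [h4]
    have hk : q * q ≤ towerLogicalQubits m := hqq ▸ ih
    have hq32 : 32 ≤ q := by
      calc (32:ℕ) = 2^5 := rfl
      _ ≤ q := Nat.pow_le_pow_right (by norm_num) (by omega)
    -- 2 * (q - 2p - 2... ) goal: 4*(q*q) ≤ 2 * (q - 2*(m+5) - 1) * (k - 1)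
    obtain ⟨a, ha⟩ : ∃ a, a + (2*(m+5)+1) = q := ⟨q - (2*(m+5)+1), by omega⟩
    have hstep : q - 2*(m+5) - 1 = a := by omega
    rw [hstep]
    have hc : q * q - 1 ≤ towerLogicalQubits m - 1 := by omega
    obtain ⟨s, hs⟩ : ∃ s, s + 1 = q * q :=
      ⟨q * q - 1, Nat.succ_pred_eq_of_pos (Nat.mul_pos (by omega) (by omega))⟩
    have hs' : q * q - 1 = s := by omega
    have h2a : q ≤ 2 * a := by omega
    have hs4 : 4 * q ≤ s := by nlinarith
    calc 4 * (q * q) = (4 * q) * q := by ring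
    _ ≤ s * (2 * a) := Nat.mul_le_mul hs4 h2a
    _ = 2 * a * s := by ring
    _ = 2 * a * (q * q - 1) := by rw [hs']
    _ ≤ 2 * a * (towerLogicalQubits m - 1) := Nat.mul_le_mul_left _ hc

lemma tower_step_key (p q a b c e k : ℕ) (hp : 8 ≤ p) (he : 1 ≤ e)
    (hq : e + (20 * p + 25) = q) (ha : a + (2 * p + 1) = q) (hb : b + 1 = q)
    (hc : c + 1 = k) (hk : q * q ≤ k) :
    (2 * q + 5 * p + 10) * b * k ≤ 2 * a * (q + 5 * p + 5) * c := by
  have ha' : a = e + 18 * p + 24 := by omega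
  have hb' : b = e + 20 * p + 24 := by omega
  have hq' : q = e + 20 * p + 25 := by omega
  have hid : 2 * a * (q + 5 * p + 5) * k = (2 * q + 5 * p + 10) * b * k + p * e * k := by
    subst hc; subst ha'; subst hb'; subst hq'; ring
  have hB : 2 * a * (q + 5 * p + 5) ≤ p * e * k := by
    have h1 : 2 * a * (q + 5 * p + 5) ≤ (2 * q) * (2 * q) :=
      Nat.mul_le_mul (by omega) (by omega)
    have h2 : (2 * q) * (2 * q) = 4 * (q * q) := by ring
    have h3 : 4 * (q * q) ≤ p * e * k := by
      calc 4 * (q * q) ≤ p * (q * q) := Nat.mul_le_mul_right _ (by omega)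
      _ ≤ p * k := Nat.mul_le_mul_left _ hk
      _ = p * 1 * k := by ring
      _ ≤ p * e * k := Nat.mul_le_mul_right _ (Nat.mul_le_mul_left _ he)
    omega
  have hfin : (2 * q + 5 * p + 10) * b * k + 2 * a * (q + 5 * p + 5)
      ≤ 2 * a * (q + 5 * p + 5) * c + 2 * a * (q + 5 * p + 5) := by
    calc (2 * q + 5 * p + 10) * b * k + 2 * a * (q + 5 * p + 5)
        ≤ (2 * q + 5 * p + 10) * b * k + p * e * k := Nat.add_le_add_left hB _
      _ = 2 * a * (q + 5 * p + 5) * k := hid.symm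
      _ = 2 * a * (q + 5 * p + 5) * c + 2 * a * (q + 5 * p + 5) := by
          rw [← hc]; ring
  exact Nat.le_of_add_le_add_right hfin

lemma inv_step_calc (p q n k a b c : ℕ)
    (ih : 11 * (q + 5 * p + 5) * n ≤ 200 * q * k)
    (hkey : (2 * q + 5 * p + 10) * b * k ≤ 2 * a * (q + 5 * p + 5) * c) :
    11 * (2 * q + 5 * p + 10) * (2 * b * n) ≤ 200 * (2 * q) * (2 * a * c) := by
  have hcancel : (q + 5 * p + 5) * (11 * (2 * q + 5 * p + 10) * (2 * b * n))
      ≤ (q + 5 * p + 5) * (200 * (2 * q) * (2 * a * c)) := by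
    calc (q + 5 * p + 5) * (11 * (2 * q + 5 * p + 10) * (2 * b * n))
        = (2 * q + 5 * p + 10) * b * (11 * (q + 5 * p + 5) * n) * 2 := by ring
      _ ≤ (2 * q + 5 * p + 10) * b * (200 * q * k) * 2 :=
          Nat.mul_le_mul_right _ (Nat.mul_le_mul_left _ ih)
      _ = (2 * q + 5 * p + 10) * b * k * (400 * q) := by ring
      _ ≤ 2 * a * (q + 5 * p + 5) * c * (400 * q) := Nat.mul_le_mul_right _ hkey
      _ = (q + 5 * p + 5) * (200 * (2 * q) * (2 * a * c)) := by ring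
  exact Nat.le_of_mul_le_mul_left hcancel (by omega)

lemma tower_inv : ∀ m, 11 * (2 ^ (m + 5) + 5 * (m + 5) + 5) * towerBlockLength m
    ≤ 200 * 2 ^ (m + 5) * towerLogicalQubits m := by
  have base0 : 11 * (2 ^ (0 + 5) + 5 * (0 + 5) + 5) * towerBlockLength 0
      ≤ 200 * 2 ^ (0 + 5) * towerLogicalQubits 0 := by decide
  have base1 : 11 * (2 ^ (1 + 5) + 5 * (1 + 5) + 5) * towerBlockLength 1
      ≤ 200 * 2 ^ (1 + 5) * towerLogicalQubits 1 := by decide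
  have base2 : 11 * (2 ^ (2 + 5) + 5 * (2 + 5) + 5) * towerBlockLength 2
      ≤ 200 * 2 ^ (2 + 5) * towerLogicalQubits 2 := by decide
  have base3 : 11 * (2 ^ (3 + 5) + 5 * (3 + 5) + 5) * towerBlockLength 3
      ≤ 200 * 2 ^ (3 + 5) * towerLogicalQubits 3 := by decide
  have step : ∀ m, 3 ≤ m →
      11 * (2 ^ (m + 5) + 5 * (m + 5) + 5) * towerBlockLength m
        ≤ 200 * 2 ^ (m + 5) * towerLogicalQubits m →
      11 * (2 ^ (m + 1 + 5) + 5 * (m + 1 + 5) + 5) * towerBlockLength (m + 1)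
        ≤ 200 * 2 ^ (m + 1 + 5) * towerLogicalQubits (m + 1) := by
    intro m hm ih
    have hp8 : 8 ≤ m + 5 := by omega
    have h20 := pow_lin2 (m + 5) hp8
    have hlin := pow_lin1 (m + 5) (by omega)
    have hk7 := tower_k7 m
    have hksq := tower_k_sq m hm
    have hqq : (4 : ℕ) ^ (m + 5) = 2 ^ (m + 5) * 2 ^ (m + 5) := by
      rw [← pow_add, show (4:ℕ) = 2 ^ 2 from rfl, ← pow_mul]; ring_nf
    have hk2 : 2 ^ (m + 5) * 2 ^ (m + 5) ≤ towerLogicalQubits m := hqq ▸ hksq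
    obtain ⟨a, ha⟩ : ∃ a, a + (2 * (m + 5) + 1) = 2 ^ (m + 5) :=
      ⟨2 ^ (m + 5) - (2 * (m + 5) + 1), by omega⟩
    obtain ⟨b, hb⟩ : ∃ b, b + 1 = 2 ^ (m + 5) := ⟨2 ^ (m + 5) - 1, by omega⟩
    obtain ⟨c, hc⟩ : ∃ c, c + 1 = towerLogicalQubits m :=
      ⟨towerLogicalQubits m - 1, by omega⟩
    obtain ⟨e, hee⟩ : ∃ e, e + (20 * (m + 5) + 25) = 2 ^ (m + 5) :=
      ⟨2 ^ (m + 5) - (20 * (m + 5) + 25), by omega⟩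
    have he1 : 1 ≤ e := by omega
    have hkey := tower_step_key (m + 5) (2 ^ (m + 5)) a b c e (towerLogicalQubits m)
      hp8 he1 hee ha hb hc hk2
    have hq2 : (2 : ℕ) ^ (m + 1 + 5) = 2 * 2 ^ (m + 5) := by
      rw [show m + 1 + 5 = (m + 5) + 1 from rfl, pow_succ]; ring
    have hn2 : towerBlockLength (m + 1) = 2 * b * towerBlockLength m := by
      rw [towerBlockLength]
      have h1 : (2:ℕ) ^ (m + 5) - 1 = b := by omega
      rw [h1]
    have hk3 : towerLogicalQubits (m + 1) = 2 * a * c := by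
      rw [towerLogicalQubits]
      have h1 : 2 ^ (m + 5) - 2 * (m + 5) - 1 = a := by omega
      have h2 : towerLogicalQubits m - 1 = c := by omega
      rw [h1, h2]
    rw [hq2, hn2, hk3]
    have hco : 2 * 2 ^ (m + 5) + 5 * (m + 1 + 5) + 5
        = 2 * 2 ^ (m + 5) + 5 * (m + 5) + 10 := by omega
    rw [hco]
    have ih' : 11 * (2 ^ (m + 5) + 5 * (m + 5) + 5) * towerBlockLength m
        ≤ 200 * 2 ^ (m + 5) * towerLogicalQubits m := ih
    exact inv_step_calc (m + 5) (2 ^ (m + 5)) (towerBlockLength m)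
      (towerLogicalQubits m) a b c ih' hkey
  intro m
  match m with
  | 0 => exact base0
  | 1 => exact base1
  | 2 => exact base2
  | (n + 3) =>
    have h3 : 3 ≤ n + 3 := by omega
    exact Nat.le_induction base3 (fun k hk ih => step k hk ih) (n + 3) h3

/-- Chunking `n` physical qubits into `⌊n/n_m⌋` blocks, each an independent copy of
`C_m` with `k_m` logical qubits, yields more than `n/20` logical qubits once `n` is
sufficiently large relative to the block size: there is `N` such that for every `m`
and every `n ≥ N·n_m`, `20·⌊n/n_m⌋·k_m > n`. -/
theorem chunked_memory_rate :
    ∃ N : ℕ, ∀ m : ℕ, ∀ n : ℕ, N * towerBlockLength m ≤ n →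
      20 * (n / towerBlockLength m) * towerLogicalQubits m > n := by
  refine ⟨12, fun m n hn => ?_⟩
  have hL : 0 < towerBlockLength m := tower_pos m
  have hinv := tower_inv m
  have h11 : 11 * towerBlockLength m ≤ 200 * towerLogicalQubits m := by
    have hq : 0 < 2 ^ (m + 5) := Nat.pow_pos (by norm_num)
    have h0 : 11 * 2 ^ (m + 5) ≤ 11 * (2 ^ (m + 5) + 5 * (m + 5) + 5) := by omega
    have h1 : 11 * 2 ^ (m + 5) * towerBlockLength m
        ≤ 200 * 2 ^ (m + 5) * towerLogicalQubits m :=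
      le_trans (Nat.mul_le_mul_right _ h0) hinv
    have h2 : 2 ^ (m + 5) * (11 * towerBlockLength m)
        ≤ 2 ^ (m + 5) * (200 * towerLogicalQubits m) := by
      calc 2 ^ (m + 5) * (11 * towerBlockLength m)
          = 11 * 2 ^ (m + 5) * towerBlockLength m := by ring
        _ ≤ 200 * 2 ^ (m + 5) * towerLogicalQubits m := h1
        _ = 2 ^ (m + 5) * (200 * towerLogicalQubits m) := by ring
    exact Nat.le_of_mul_le_mul_left h2 hq
  have hdm : towerBlockLength m * (n / towerBlockLength m) + n % towerBlockLength m = n :=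
    Nat.div_add_mod n (towerBlockLength m)
  have hr : n % towerBlockLength m < towerBlockLength m := Nat.mod_lt n hL
  have h2 : 11 * (towerBlockLength m * (n / towerBlockLength m))
      ≤ 200 * (towerLogicalQubits m * (n / towerBlockLength m)) := by
    calc 11 * (towerBlockLength m * (n / towerBlockLength m))
        = 11 * towerBlockLength m * (n / towerBlockLength m) := by ring
      _ ≤ 200 * towerLogicalQubits m * (n / towerBlockLength m) :=
          Nat.mul_le_mul_right _ h11
      _ = 200 * (towerLogicalQubits m * (n / towerBlockLength m)) := by ring
  have hgoal : 20 * (towerLogicalQubits m * (n / towerBlockLength m)) > n := by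
    obtain ⟨X, hX⟩ : ∃ X, towerLogicalQubits m * (n / towerBlockLength m) = X := ⟨_, rfl⟩
    obtain ⟨Y, hY⟩ : ∃ Y, towerBlockLength m * (n / towerBlockLength m) = Y := ⟨_, rfl⟩
    rw [hX, hY] at h2
    rw [hY] at hdm
    rw [hX]
    omega
  calc n < 20 * (towerLogicalQubits m * (n / towerBlockLength m)) := hgoal
    _ = 20 * (n / towerBlockLength m) * towerLogicalQubits m := by ring
end
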